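/- Define the flowshop scheduling recursions: forward scheduling sets $s_{\mu,i}=\max(t_{\mu,i-1},t_{\mu-1,i})$ and $t_{\mu,i}=s_{\mu,i}+x_{\mu,i}$; backward scheduling sets $t_{\mu,i}=\min(s_{\mu,i+1},s_{\mu+1,i})$ and $s_{\mu,i}=t_{\mu,i}-x_{\mu,i}$. With $M$ machines, $N$ jobs, processing time matrix $X\in\mathbb{R}^{M\times N}$, and fiducial machine $\nu$, let $T(\nu)=t_{M,N}(\nu)-s_{1,1}(\nu)$ be the resulting makespan. Let $X'$ denote the matrix obtained by reversing the order of both machines and jobs: $x'_{\mu,i}=x_{M+1-\mu,N+1-i}$. Then the makespan of $X$ with fiducial machine $\nu$ equals the makespan of $X'$ with fiducial machine $M+1-\nu$; consequently, if the entries of $X$ are i.i.d., then $\mathbb{E}_X[T(\nu)]=\mathbb{E}_X[T(M+1-\nu)]$. -/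

import Mathlib

open MeasureTheory ProbabilityTheory

/-- `Sched M N ν x s t` says that `s, t` are the starting/terminate times produced
by the flowshop scheduling algorithm with `M` machines, `N` jobs, processing-time
matrix `x` (indices `1..M`, `1..N`), and fiducial machine `ν`: the fiducial row is
processed back to back starting at time `0`, machines after `ν` are scheduled
forward (`s = max` of predecessors, `t = s + x`), and machines before `ν` are
scheduled backward (`t = min` of successors, `s = t - x`). -/
def Sched (M N ν : ℕ) (x s t : ℕ → ℕ → ℝ) : Prop :=
  s ν 1 = 0 ∧
  (∀ i, 1 ≤ i → i ≤ N → t ν i = s ν i + x ν i) ∧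
  (∀ i, 1 ≤ i → i < N → s ν (i + 1) = t ν i) ∧
  (∀ μ, ν < μ → μ ≤ M →
    (s μ 1 = t (μ - 1) 1 ∧
      ∀ i, 2 ≤ i → i ≤ N → s μ i = max (t μ (i - 1)) (t (μ - 1) i)) ∧
    (∀ i, 1 ≤ i → i ≤ N → t μ i = s μ i + x μ i)) ∧
  (∀ μ, 1 ≤ μ → μ < ν →
    (t μ N = s (μ + 1) N ∧
      ∀ i, 1 ≤ i → i < N → t μ i = min (s μ (i + 1)) (s (μ + 1) i)) ∧
    (∀ i, 1 ≤ i → i ≤ N → s μ i = t μ i - x μ i))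

noncomputable def tfid (xr : ℕ → ℝ) : ℕ → ℝ
  | 0 => 0
  | (i+1) => tfid xr i + xr (i+1)

noncomputable def rowF (xr prev : ℕ → ℝ) : ℕ → ℝ
  | 0 => 0
  | (i+1) => (if i = 0 then prev 1 else max (rowF xr prev i) (prev (i+1))) + xr (i+1)

noncomputable def fwdT (x : ℕ → ℕ → ℝ) (ν : ℕ) : ℕ → ℕ → ℝ
  | 0 => tfid (x ν)
  | (d+1) => rowF (x (ν+d+1)) (fwdT x ν d)

noncomputable def rowB (N : ℕ) (xr nxt : ℕ → ℝ) : ℕ → ℝ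
  | 0 => nxt N - xr N
  | (k+1) => min (rowB N xr nxt k) (nxt (N-k-1)) - xr (N-k-1)

noncomputable def bwdS (x : ℕ → ℕ → ℝ) (N ν : ℕ) : ℕ → ℕ → ℝ
  | 0 => fun i => tfid (x ν) (i-1)
  | (e+1) => fun i => rowB N (x (ν-e-1)) (bwdS x N ν e) (N-i)

noncomputable def cS (x : ℕ → ℕ → ℝ) (N ν μ i : ℕ) : ℝ :=
  if μ < ν then bwdS x N ν (ν-μ) i
  else if μ = ν then tfid (x ν) (i-1)
  else fwdT x ν (μ-ν) i - x μ i

noncomputable def cT (x : ℕ → ℕ → ℝ) (N ν μ i : ℕ) : ℝ :=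
  if μ < ν then cS x N ν μ i + x μ i else fwdT x ν (μ-ν) i

lemma sched_exists (M N ν : ℕ) (hN : 1 ≤ N) (hν₁ : 1 ≤ ν) (x : ℕ → ℕ → ℝ) :
    Sched M N ν x (cS x N ν) (cT x N ν) := by
  refine ⟨?_, ?_, ?_, ?_, ?_⟩
  · simp [cS, tfid]
  · intro i h1 h2
    obtain ⟨j, rfl⟩ : ∃ j, i = j + 1 := ⟨i - 1, by omega⟩
    simp [cS, cT, fwdT, tfid]
  · intro i h1 h2
    simp [cS, cT, fwdT]
  · intro μ hμ1 hμ2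
    have hlt : ¬ μ < ν := by omega
    have hne : ¬ μ = ν := by omega
    obtain ⟨d, hd⟩ : ∃ d, μ - ν = d + 1 := ⟨μ - ν - 1, by omega⟩
    have hμd : μ = ν + d + 1 := by omega
    have hμ1ν : ¬ (μ - 1) < ν := by omega
    have prevEq : ∀ j, cT x N ν (μ-1) j = fwdT x ν d j := by
      intro j
      have hd2 : μ - 1 - ν = d := by omega
      simp only [cT, if_neg hμ1ν, hd2]
    constructor
    · constructor
      · simp only [cS, cT, if_neg hlt, if_neg hne, hd, prevEq 1]
        rw [hμd]
        simp [fwdT, rowF]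
      · intro i h2i hiN
        obtain ⟨j, rfl⟩ : ∃ j, i = j + 1 := ⟨i - 1, by omega⟩
        have hj : j ≠ 0 := by omega
        rw [show (j+1) - 1 = j from rfl, prevEq (j+1)]
        simp only [cS, cT, if_neg hlt, if_neg hne, hd]
        rw [hμd]
        simp only [fwdT, rowF, if_neg hj]
        rw [← hμd]
        ring
    · intro i h1 h2
      simp only [cS, cT, if_neg hlt, if_neg hne, hd]
      ring
  · intro μ hμ1 hμν
    have hlt : μ < ν := hμν
    obtain ⟨e, he⟩ : ∃ e, ν - μ = e + 1 := ⟨ν - μ - 1, by omega⟩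
    have hμe : μ = ν - e - 1 := by omega
    have nxtEq : ∀ j, cS x N ν (μ+1) j = bwdS x N ν e j := by
      intro j
      rcases Nat.lt_or_ge (μ+1) ν with h | h
      · have : ν - (μ+1) = e := by omega
        simp [cS, h, this]
      · have heq : μ + 1 = ν := by omega
        have he0 : e = 0 := by omega
        simp [cS, heq, he0, bwdS]
    have hSc : ∀ i, cS x N ν μ i = rowB N (x μ) (bwdS x N ν e) (N - i) := by
      intro i
      simp only [cS, if_pos hlt, he, bwdS]
      rw [← hμe]
    constructor
    · constructor
      · simp only [cT, if_pos hlt, hSc, Nat.sub_self, rowB, nxtEq]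
        ring
      · intro i h1i hiN
        have hNi : N - i = (N - i - 1) + 1 := by omega
        simp only [cT, if_pos hlt, hSc, nxtEq]
        rw [hNi]
        simp only [rowB]
        have e1 : N - (N - i - 1) - 1 = i := by omega
        have e2 : N - (i + 1) = N - i - 1 := by omega
        rw [e1, e2]
        ring
    · intro i h1 h2
      simp only [cS, cT, if_pos hlt]
      ring

lemma sched_unique {M N ν : ℕ} (hN : 1 ≤ N) (hν₁ : 1 ≤ ν) (hν₂ : ν ≤ M)
    {x s t s' t' : ℕ → ℕ → ℝ}
    (h : Sched M N ν x s t) (h' : Sched M N ν x s' t') :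
    ∀ μ, 1 ≤ μ → μ ≤ M → ∀ i, 1 ≤ i → i ≤ N → s μ i = s' μ i ∧ t μ i = t' μ i := by
  obtain ⟨a1, a2, a3, a4, a5⟩ := h
  obtain ⟨b1, b2, b3, b4, b5⟩ := h'
  have fid : ∀ i, 1 ≤ i → i ≤ N → s ν i = s' ν i ∧ t ν i = t' ν i := by
    intro i
    induction i with
    | zero => intro h; omega
    | succ j ih =>
      intro h1 h2
      have hs : s ν (j+1) = s' ν (j+1) := by
        rcases Nat.eq_zero_or_pos j with rfl | hj
        · rw [a1, b1]
        · rw [a3 j hj (by omega), b3 j hj (by omega), (ih hj (by omega)).2]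
      exact ⟨hs, by rw [a2 _ h1 h2, b2 _ h1 h2, hs]⟩
  have fwd : ∀ d, ν + d ≤ M → ∀ i, 1 ≤ i → i ≤ N →
      s (ν+d) i = s' (ν+d) i ∧ t (ν+d) i = t' (ν+d) i := by
    intro d
    induction d with
    | zero => intro _; simpa using fid
    | succ e ih =>
      intro hdM
      set μ := ν + (e+1) with hμ
      have hμν : ν < μ := by omega
      have hμM : μ ≤ M := by omega
      have hprev : ∀ i, 1 ≤ i → i ≤ N → s (μ-1) i = s' (μ-1) i ∧ t (μ-1) i = t' (μ-1) i := by
        have : μ - 1 = ν + e := by omega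
        rw [this]; exact ih (by omega)
      obtain ⟨⟨c1, c2⟩, c3⟩ := a4 μ hμν hμM
      obtain ⟨⟨d1, d2⟩, d3⟩ := b4 μ hμν hμM
      intro i
      induction i with
      | zero => intro h; omega
      | succ j ihj =>
        intro h1 h2
        have hs : s μ (j+1) = s' μ (j+1) := by
          rcases Nat.eq_zero_or_pos j with rfl | hj
          · rw [c1, d1, (hprev 1 le_rfl hN).2]
          · rw [c2 (j+1) (by omega) h2, d2 (j+1) (by omega) h2]
            rw [show (j+1) - 1 = j from rfl]
            rw [(ihj hj (by omega)).2, (hprev (j+1) (by omega) h2).2]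
        exact ⟨hs, by rw [c3 _ h1 h2, d3 _ h1 h2, hs]⟩
  have bwd : ∀ d, d < ν → ∀ i, 1 ≤ i → i ≤ N →
      s (ν-d) i = s' (ν-d) i ∧ t (ν-d) i = t' (ν-d) i := by
    intro d
    induction d with
    | zero => intro _; simpa using fid
    | succ e ih =>
      intro hd
      set μ := ν - (e+1) with hμ
      have hμ1 : 1 ≤ μ := by omega
      have hμν : μ < ν := by omega
      have hnext : ∀ i, 1 ≤ i → i ≤ N → s (μ+1) i = s' (μ+1) i ∧ t (μ+1) i = t' (μ+1) i := by
        have : μ + 1 = ν - e := by omega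
        rw [this]; exact ih (by omega)
      obtain ⟨⟨c1, c2⟩, c3⟩ := a5 μ hμ1 hμν
      obtain ⟨⟨d1, d2⟩, d3⟩ := b5 μ hμ1 hμν
      have hbase : t μ N = t' μ N ∧ s μ N = s' μ N := by
        have ht : t μ N = t' μ N := by
          rw [c1, d1, (hnext N hN le_rfl).1]
        exact ⟨ht, by rw [c3 N hN le_rfl, d3 N hN le_rfl, ht]⟩
      have key : ∀ k i, 1 ≤ i → i ≤ N → N ≤ i + k → t μ i = t' μ i ∧ s μ i = s' μ i := by
        intro k
        induction k with
        | zero =>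
          intro i h1 h2 h3
          have : i = N := by omega
          subst this; exact hbase
        | succ m ihm =>
          intro i h1 h2 h3
          rcases Nat.lt_or_ge i N with hiN | hiN
          · have ht : t μ i = t' μ i := by
              rw [c2 i h1 hiN, d2 i h1 hiN]
              rw [(ihm (i+1) (by omega) (by omega) (by omega)).2,
                (hnext i h1 (by omega)).1]
            exact ⟨ht, by rw [c3 i h1 (by omega), d3 i h1 (by omega), ht]⟩
          · have : i = N := by omega
            subst this; exact hbase
      intro i h1 h2
      exact ⟨(key N i h1 h2 (by omega)).2, (key N i h1 h2 (by omega)).1⟩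
  intro μ h1 h2 i hi1 hi2
  rcases Nat.lt_or_ge μ ν with hlt | hge
  · have := bwd (ν - μ) (by omega) i hi1 hi2
    rwa [show ν - (ν - μ) = μ by omega] at this
  · have := fwd (μ - ν) (by omega) i hi1 hi2
    rwa [show ν + (μ - ν) = μ by omega] at this

lemma sub_min' (a b c : ℝ) : a - min b c = max (a-b) (a-c) := by
  rcases le_total b c with h | h
  · rw [min_eq_left h, max_eq_left (by linarith)]
  · rw [min_eq_right h, max_eq_right (by linarith)]

lemma sub_max' (a b c : ℝ) : a - max b c = min (a-b) (a-c) := by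
  rcases le_total b c with h | h
  · rw [max_eq_right h, min_eq_right (by linarith)]
  · rw [max_eq_left h, min_eq_left (by linarith)]

lemma sched_rev {M N ν : ℕ} (hM : 1 ≤ M) (hN : 1 ≤ N) (hν₁ : 1 ≤ ν) (hν₂ : ν ≤ M)
    {x s t : ℕ → ℕ → ℝ} (h : Sched M N ν x s t) :
    Sched M N (M+1-ν) (fun μ i => x (M+1-μ) (N+1-i))
      (fun μ i => t ν N - t (M+1-μ) (N+1-i))
      (fun μ i => t ν N - s (M+1-μ) (N+1-i)) := by
  obtain ⟨a1, a2, a3, a4, a5⟩ := h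
  set ν' := M + 1 - ν with hν'
  have hνν : M + 1 - ν' = ν := by omega
  refine ⟨?_, ?_, ?_, ?_, ?_⟩
  · beta_reduce
    rw [hνν, show N + 1 - 1 = N from by omega, sub_self]
  · intro i h1 h2
    beta_reduce
    set j := N + 1 - i with hj
    have hj1 : 1 ≤ j := by omega
    have hj2 : j ≤ N := by omega
    rw [hνν]
    have := a2 j hj1 hj2
    linarith [this]
  · intro i h1 h2
    beta_reduce
    rw [hνν]
    have e1 : N + 1 - (i + 1) = N - i := by omega
    have e2 : N + 1 - i = (N - i) + 1 := by omega
    rw [e1, e2, a3 (N-i) (by omega) (by omega)]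
  · intro μ hμ1 hμ2
    set m := M + 1 - μ with hm
    have hm1 : 1 ≤ m := by omega
    have hmν : m < ν := by omega
    obtain ⟨⟨c1, c2⟩, c3⟩ := a5 m hm1 hmν
    refine ⟨⟨?_, ?_⟩, ?_⟩
    · beta_reduce
      have e1 : N + 1 - 1 = N := by omega
      have e2 : M + 1 - (μ - 1) = m + 1 := by omega
      rw [e1, e2, c1]
    · intro i h2i hiN
      beta_reduce
      set j := N + 1 - i with hj
      have hj1 : 1 ≤ j := by omega
      have hjN : j < N := by omega
      have e1 : N + 1 - (i - 1) = j + 1 := by omega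
      have e2 : M + 1 - (μ - 1) = m + 1 := by omega
      rw [e1, e2, c2 j hj1 hjN, sub_min']
    · intro i h1 h2
      beta_reduce
      set j := N + 1 - i with hj
      have hj1 : 1 ≤ j := by omega
      have hj2 : j ≤ N := by omega
      have := c3 j hj1 hj2
      linarith [this]
  · intro μ hμ1 hμν
    set m := M + 1 - μ with hm
    have hm1 : ν < m := by omega
    have hm2 : m ≤ M := by omega
    obtain ⟨⟨c1, c2⟩, c3⟩ := a4 m hm1 hm2
    refine ⟨⟨?_, ?_⟩, ?_⟩
    · beta_reduce
      have e1 : N + 1 - N = 1 := by omega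
      have e2 : M + 1 - (μ + 1) = m - 1 := by omega
      rw [e1, e2, c1]
    · intro i h1i hiN
      beta_reduce
      set j := N + 1 - i with hj
      have hj1 : 2 ≤ j := by omega
      have hjN : j ≤ N := by omega
      have e1 : N + 1 - (i + 1) = j - 1 := by omega
      have e2 : M + 1 - (μ + 1) = m - 1 := by omega
      rw [e1, e2, c2 j hj1 hjN, sub_max']
    · intro i h1 h2
      beta_reduce
      set j := N + 1 - i with hj
      have hj1 : 1 ≤ j := by omega
      have hj2 : j ≤ N := by omega
      have := c3 j hj1 hj2
      linarith [this]

section Meas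

variable {α : Type*} [MeasurableSpace α]

lemma meas_tfid {f : α → ℕ → ℝ} (hf : ∀ j, Measurable fun a => f a j) (i : ℕ) :
    Measurable fun a => tfid (f a) i := by
  induction i with
  | zero => simpa [tfid] using measurable_const
  | succ j ih => simp only [tfid]; exact ih.add (hf (j+1))

lemma meas_rowF {f p : α → ℕ → ℝ} (hf : ∀ j, Measurable fun a => f a j)
    (hp : ∀ j, Measurable fun a => p a j) (i : ℕ) :
    Measurable fun a => rowF (f a) (p a) i := by
  induction i with
  | zero => simpa [rowF] using measurable_const
  | succ j ih =>
    simp only [rowF]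
    split_ifs
    · exact (hp 1).add (hf (j+1))
    · exact (ih.max (hp (j+1))).add (hf (j+1))

lemma meas_rowB {N : ℕ} {f p : α → ℕ → ℝ} (hf : ∀ j, Measurable fun a => f a j)
    (hp : ∀ j, Measurable fun a => p a j) (k : ℕ) :
    Measurable fun a => rowB N (f a) (p a) k := by
  induction k with
  | zero => simp only [rowB]; exact (hp N).sub (hf N)
  | succ m ih =>
    simp only [rowB]
    exact (ih.min (hp (N-m-1))).sub (hf (N-m-1))

lemma meas_fwdT {g : α → ℕ → ℕ → ℝ} (hg : ∀ μ i, Measurable fun a => g a μ i)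
    (ν d i : ℕ) : Measurable fun a => fwdT (g a) ν d i := by
  induction d generalizing i with
  | zero => simpa [fwdT] using meas_tfid (hg ν) i
  | succ e ih =>
    simp only [fwdT]
    exact meas_rowF (hg (ν+e+1)) ih i

lemma meas_bwdS {g : α → ℕ → ℕ → ℝ} (hg : ∀ μ i, Measurable fun a => g a μ i)
    (N ν e i : ℕ) : Measurable fun a => bwdS (g a) N ν e i := by
  induction e generalizing i with
  | zero => simpa [bwdS] using meas_tfid (hg ν) (i-1)
  | succ m ih =>
    simp only [bwdS]
    exact meas_rowB (hg (ν-m-1)) (fun j => ih j) (N-i)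

lemma meas_cS {g : α → ℕ → ℕ → ℝ} (hg : ∀ μ i, Measurable fun a => g a μ i)
    (N ν μ i : ℕ) : Measurable fun a => cS (g a) N ν μ i := by
  unfold cS
  split_ifs
  · exact meas_bwdS hg N ν (ν-μ) i
  · exact meas_tfid (hg ν) (i-1)
  · exact (meas_fwdT hg ν (μ-ν) i).sub (hg μ i)

lemma meas_cT {g : α → ℕ → ℕ → ℝ} (hg : ∀ μ i, Measurable fun a => g a μ i)
    (N ν μ i : ℕ) : Measurable fun a => cT (g a) N ν μ i := by
  unfold cT
  split_ifs
  · exact (meas_cS hg N ν μ i).add (hg μ i)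
  · exact meas_fwdT hg ν (μ-ν) i

end Meas

lemma sched_congr {M N ν : ℕ} (hν₁ : 1 ≤ ν) (hν₂ : ν ≤ M)
    {x y s t : ℕ → ℕ → ℝ}
    (hxy : ∀ μ i, 1 ≤ μ → μ ≤ M → 1 ≤ i → i ≤ N → x μ i = y μ i)
    (h : Sched M N ν x s t) : Sched M N ν y s t := by
  obtain ⟨a1, a2, a3, a4, a5⟩ := h
  refine ⟨a1, ?_, a3, ?_, ?_⟩
  · intro i h1 h2
    rw [a2 i h1 h2, hxy ν i hν₁ hν₂ h1 h2]
  · intro μ hμ1 hμ2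
    obtain ⟨c1, c2⟩ := a4 μ hμ1 hμ2
    exact ⟨c1, fun i h1 h2 => by rw [c2 i h1 h2, hxy μ i (by omega) hμ2 h1 h2]⟩
  · intro μ hμ1 hμ2
    obtain ⟨c1, c2⟩ := a5 μ hμ1 hμ2
    exact ⟨c1, fun i h1 h2 => by rw [c2 i h1 h2, hxy μ i hμ1 (by omega) h1 h2]⟩

lemma mkval_congr {M N ρ : ℕ} (hM : 1 ≤ M) (hN : 1 ≤ N) (hρ₁ : 1 ≤ ρ) (hρ₂ : ρ ≤ M)
    {x y : ℕ → ℕ → ℝ}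
    (hxy : ∀ μ i, 1 ≤ μ → μ ≤ M → 1 ≤ i → i ≤ N → x μ i = y μ i) :
    cT x N ρ M N - cS x N ρ 1 1 = cT y N ρ M N - cS y N ρ 1 1 := by
  have h1 := sched_exists M N ρ hN hρ₁ x
  have h2 : Sched M N ρ x (cS y N ρ) (cT y N ρ) :=
    sched_congr hρ₁ hρ₂ (fun μ i a b c d => (hxy μ i a b c d).symm)
      (sched_exists M N ρ hN hρ₁ y)
  have u := sched_unique hN hρ₁ hρ₂ h1 h2
  rw [(u M hM le_rfl N hN le_rfl).2, (u 1 le_rfl hM 1 le_rfl hN).1]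

lemma mkval_rev {M N ρ : ℕ} (hM : 1 ≤ M) (hN : 1 ≤ N) (hρ₁ : 1 ≤ ρ) (hρ₂ : ρ ≤ M)
    (x : ℕ → ℕ → ℝ) :
    cT x N ρ M N - cS x N ρ 1 1 =
      cT (fun μ i => x (M+1-μ) (N+1-i)) N (M+1-ρ) M N
        - cS (fun μ i => x (M+1-μ) (N+1-i)) N (M+1-ρ) 1 1 := by
  have hρ'₁ : 1 ≤ M + 1 - ρ := by omega
  have hρ'₂ : M + 1 - ρ ≤ M := by omega
  have h2 := sched_rev hM hN hρ₁ hρ₂ (sched_exists M N ρ hN hρ₁ x)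
  have h3 := sched_exists M N (M+1-ρ) hN hρ'₁ (fun μ i => x (M+1-μ) (N+1-i))
  have u := sched_unique hN hρ'₁ hρ'₂ h3 h2
  have e1 := (u M hM le_rfl N hN le_rfl).2
  have e2 := (u 1 le_rfl hM 1 le_rfl hN).1
  beta_reduce at e1 e2
  rw [show M + 1 - M = 1 by omega, show N + 1 - N = 1 by omega] at e1
  rw [show M + 1 - 1 = M by omega, show N + 1 - 1 = N by omega] at e2
  rw [e1, e2]
  ring

lemma map_eq_pi_law {Ω : Type*} [MeasureSpace Ω] [IsProbabilityMeasure (ℙ : Measure Ω)]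
    (X : ℕ → ℕ → Ω → ℝ) (hmeas : ∀ μ i, Measurable (X μ i))
    (hident : ∀ μ i, Measure.map (X μ i) ℙ = Measure.map (X 1 1) ℙ)
    (hindep : iIndepFun (fun p : ℕ × ℕ => X p.1 p.2) ℙ)
    {ι : Type*} [Fintype ι] [Nonempty ι] (f : ι → ℕ × ℕ) (hf : Function.Injective f) :
    Measure.map (fun ω (i : ι) => X (f i).1 (f i).2 ω) ℙ
      = Measure.pi (fun _ : ι => Measure.map (X 1 1) ℙ) := by
  have hm : IsProbabilityMeasure (Measure.map (X 1 1) ℙ) :=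
    Measure.isProbabilityMeasure_map (hmeas 1 1).aemeasurable
  symm
  apply Measure.pi_eq
  intro s hs
  have hY : Measurable (fun ω (i : ι) => X (f i).1 (f i).2 ω) :=
    measurable_pi_lambda _ fun i => hmeas _ _
  rw [Measure.map_apply hY (MeasurableSet.univ_pi hs)]
  set g := Function.invFun f with hg
  have hgf : ∀ i, g (f i) = i := fun i => Function.leftInverse_invFun hf i
  have hpre : (fun ω (i : ι) => X (f i).1 (f i).2 ω) ⁻¹' Set.pi Set.univ s
      = ⋂ q ∈ Finset.image f Finset.univ, X q.1 q.2 ⁻¹' s (g q) := by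
    ext ω
    simp only [Set.mem_preimage, Set.mem_pi, Set.mem_univ, forall_true_left,
      Set.mem_iInter, Finset.mem_image, Finset.mem_univ, true_and]
    constructor
    · rintro h q ⟨i, rfl⟩
      rw [hgf]; exact h i
    · intro h i
      have := h (f i) ⟨i, rfl⟩
      rwa [hgf] at this
  rw [hpre, hindep.measure_inter_preimage_eq_mul _ (fun q _ => hs (g q)),
    Finset.prod_image (fun a _ b _ hab => hf hab)]
  refine Finset.prod_congr rfl fun i _ => ?_
  rw [hgf, ← hident (f i).1 (f i).2, Measure.map_apply (hmeas _ _) (hs i)]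

/-- Time-reversal symmetry of the flowshop makespan: the makespan of `x` with
fiducial machine `ν` equals the makespan of the doubly reversed matrix
`x'_{μ,i} = x_{M+1-μ,N+1-i}` with fiducial machine `M+1-ν`; consequently, for a
matrix with i.i.d. entries, `E[T(ν)] = E[T(M+1-ν)]`. -/
theorem makespan_reversal_symmetry {Ω : Type*} [MeasureSpace Ω]
    [IsProbabilityMeasure (ℙ : Measure Ω)]
    (M N : ℕ) (hM : 1 ≤ M) (hN : 1 ≤ N) (ν : ℕ) (hν₁ : 1 ≤ ν) (hν₂ : ν ≤ M)
    (X : ℕ → ℕ → Ω → ℝ) (hmeas : ∀ μ i, Measurable (X μ i))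
    (hident : ∀ μ i, Measure.map (X μ i) ℙ = Measure.map (X 1 1) ℙ)
    (hindep : iIndepFun (fun p : ℕ × ℕ => X p.1 p.2) ℙ)
    (mk : (ℕ → ℕ → ℝ) → ℕ → ℝ)
    (hmk : ∀ (x s t : ℕ → ℕ → ℝ) (μ : ℕ), 1 ≤ μ → μ ≤ M →
      Sched M N μ x s t → mk x μ = t M N - s 1 1)
    (hint : ∀ μ, Integrable (fun ω => mk (fun a b => X a b ω) μ) ℙ) :
    (∀ (x s t s' t' : ℕ → ℕ → ℝ),
      Sched M N ν x s t →
      Sched M N (M + 1 - ν) (fun μ i => x (M + 1 - μ) (N + 1 - i)) s' t' →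
      t M N - s 1 1 = t' M N - s' 1 1) ∧
    ∫ ω, mk (fun a b => X a b ω) ν = ∫ ω, mk (fun a b => X a b ω) (M + 1 - ν) := by
  have hν'₁ : 1 ≤ M + 1 - ν := by omega
  have hν'₂ : M + 1 - ν ≤ M := by omega
  constructor
  · intro x s t s' t' h h'
    have u1 := sched_unique hN hν₁ hν₂ h (sched_exists M N ν hN hν₁ x)
    have u2 := sched_unique hN hν'₁ hν'₂ h'
      (sched_exists M N (M+1-ν) hN hν'₁ (fun μ i => x (M + 1 - μ) (N + 1 - i)))
    rw [(u1 M hM le_rfl N hN le_rfl).2, (u1 1 le_rfl hM 1 le_rfl hN).1,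
      (u2 M hM le_rfl N hN le_rfl).2, (u2 1 le_rfl hM 1 le_rfl hN).1]
    exact mkval_rev hM hN hν₁ hν₂ x
  · haveI : Nonempty (Fin M × Fin N) := ⟨(⟨0, hM⟩, ⟨0, hN⟩)⟩
    set E : (Fin M × Fin N → ℝ) → ℕ → ℕ → ℝ := fun v a b =>
      if h : 1 ≤ a ∧ a ≤ M ∧ 1 ≤ b ∧ b ≤ N then v (⟨a-1, by omega⟩, ⟨b-1, by omega⟩)
      else 0 with hE
    have hEmeas : ∀ a b, Measurable fun v : Fin M × Fin N → ℝ => E v a b := by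
      intro a b
      rw [hE]
      beta_reduce
      split_ifs with h
      · exact measurable_pi_apply _
      · exact measurable_const
    set G : (Fin M × Fin N → ℝ) → ℝ :=
      fun v => cT (E v) N (M+1-ν) M N - cS (E v) N (M+1-ν) 1 1 with hGdef
    have hG : Measurable G :=
      (meas_cT hEmeas N (M+1-ν) M N).sub (meas_cS hEmeas N (M+1-ν) 1 1)
    set f1 : Fin M × Fin N → ℕ × ℕ := fun p => (p.1.1 + 1, p.2.1 + 1) with hf1
    set f2 : Fin M × Fin N → ℕ × ℕ := fun p => (M - p.1.1, N - p.2.1) with hf2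
    have hf1inj : Function.Injective f1 := by
      intro p q h
      rw [hf1] at h
      simp only [Prod.mk.injEq] at h
      exact Prod.ext (Fin.ext (by omega)) (Fin.ext (by omega))
    have hf2inj : Function.Injective f2 := by
      intro p q h
      rw [hf2] at h
      simp only [Prod.mk.injEq] at h
      have h1 := p.1.isLt; have h2 := q.1.isLt
      have h3 := p.2.isLt; have h4 := q.2.isLt
      exact Prod.ext (Fin.ext (by omega)) (Fin.ext (by omega))
    set Y : Ω → Fin M × Fin N → ℝ := fun ω p => X (f1 p).1 (f1 p).2 ω with hYdef
    set Y' : Ω → Fin M × Fin N → ℝ := fun ω p => X (f2 p).1 (f2 p).2 ω with hY'def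
    have hY : Measurable Y := measurable_pi_lambda _ fun p => hmeas _ _
    have hY' : Measurable Y' := measurable_pi_lambda _ fun p => hmeas _ _
    have lawY := map_eq_pi_law X hmeas hident hindep f1 hf1inj
    have lawY' := map_eq_pi_law X hmeas hident hindep f2 hf2inj
    have hidY : ∀ ω, mk (fun a b => X a b ω) (M+1-ν) = G (Y ω) := by
      intro ω
      rw [hmk _ (cS _ N (M+1-ν)) (cT _ N (M+1-ν)) (M+1-ν) hν'₁ hν'₂
        (sched_exists M N (M+1-ν) hN hν'₁ _), hGdef]
      refine mkval_congr hM hN hν'₁ hν'₂ fun μ i h1 h2 h3 h4 => ?_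
      rw [hE, hYdef, hf1]
      beta_reduce
      rw [dif_pos ⟨h1, h2, h3, h4⟩]
      simp only []
      congr 1 <;> omega
    have hidY' : ∀ ω, mk (fun a b => X a b ω) ν = G (Y' ω) := by
      intro ω
      rw [hmk _ (cS _ N ν) (cT _ N ν) ν hν₁ hν₂ (sched_exists M N ν hN hν₁ _), hGdef]
      rw [mkval_rev hM hN hν₁ hν₂ (fun a b => X a b ω)]
      refine mkval_congr hM hN hν'₁ hν'₂ fun μ i h1 h2 h3 h4 => ?_
      rw [hE, hY'def, hf2]
      beta_reduce
      rw [dif_pos ⟨h1, h2, h3, h4⟩]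
      simp only []
      congr 1 <;> omega
    calc ∫ ω, mk (fun a b => X a b ω) ν
        = ∫ ω, G (Y' ω) := integral_congr_ae (Filter.Eventually.of_forall hidY')
      _ = ∫ v, G v ∂(Measure.map Y' ℙ) :=
          (integral_map hY'.aemeasurable hG.aestronglyMeasurable).symm
      _ = ∫ v, G v ∂(Measure.map Y ℙ) := by rw [hYdef, hY'def, lawY, lawY']
      _ = ∫ ω, G (Y ω) := integral_map hY.aemeasurable hG.aestronglyMeasurable
      _ = ∫ ω, mk (fun a b => X a b ω) (M + 1 - ν) :=
          integral_congr_ae (Filter.Eventually.of_forall fun ω => (hidY ω).symm)
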